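/- Bounds on the nonlinear functionals F₁, F₂, F₃, F₄ (Lemma B.2): There exist δ > 0 and positive constants C₅, C₆, C₇, C₈ such that for every C¹ map γ : [0,1] → ℝ² with ‖γ‖_∞ < δ and every x ∈ [0,1]: |F₁[γ](x)| ≤ C₅ (|γ(x)| + ‖γ‖_{L¹}); |F₂[γ](x)| ≤ C₆ (|γ(x)|² + ‖γ‖_{L¹}²); |F₃[γ,γ_x](x)| ≤ C₇ (‖γ‖_{L²} + |γ(x)|)(‖γ_x‖_{L²} + |γ_x(x)|); |F₄[γ](x)| ≤ C₈ (|γ(x)|² + ‖γ‖_{L²}²). -/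

import Mathlib

open MeasureTheory Set

/-- The triangular domain T = {(x,ξ) : 0 ≤ ξ ≤ x ≤ 1}. -/
def Tri : Set (ℝ × ℝ) := {p | 0 ≤ p.2 ∧ p.2 ≤ p.1 ∧ p.1 ≤ 1}

/-- The ℓ¹ norm `|v| = |v₁| + |v₂|` on ℝ². -/
noncomputable def vnorm (v : Fin 2 → ℝ) : ℝ := |v 0| + |v 1|

/-- The matrix norm `|M| = max { |M v| : |v| = 1 }` induced by `vnorm`. -/
noncomputable def mnorm (M : Matrix (Fin 2) (Fin 2) ℝ) : ℝ :=
  sSup {r : ℝ | ∃ v : Fin 2 → ℝ, vnorm v = 1 ∧ r = vnorm (M.mulVec v)}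

/-- `‖γ‖_∞ = sup_{x ∈ [0,1]} |γ(x)|`. -/
noncomputable def supnorm (γ : ℝ → Fin 2 → ℝ) : ℝ := ⨆ x : Icc (0:ℝ) 1, vnorm (γ x)

/-- `‖γ‖_{L¹} = ∫₀¹ |γ(ξ)| dξ`. -/
noncomputable def l1norm (γ : ℝ → Fin 2 → ℝ) : ℝ := ∫ ξ in (0:ℝ)..1, vnorm (γ ξ)

/-- `‖γ‖_{L²} = (∫₀¹ |γ(ξ)|² dξ)^{1/2}`. -/
noncomputable def l2norm (γ : ℝ → Fin 2 → ℝ) : ℝ :=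
  Real.sqrt (∫ ξ in (0:ℝ)..1, (vnorm (γ ξ)) ^ 2)

/-- `𝒦[h](x) = h(x) − ∫₀ˣ K(x,ξ) h(ξ) dξ`. -/
noncomputable def opK (K : ℝ → ℝ → Matrix (Fin 2) (Fin 2) ℝ)
    (h : ℝ → Fin 2 → ℝ) (x : ℝ) : Fin 2 → ℝ :=
  h x - ∫ ξ in (0:ℝ)..x, (K x ξ).mulVec (h ξ)

/-- `ℒ[γ](x) = γ(x) + ∫₀ˣ L(x,ξ) γ(ξ) dξ`. -/
noncomputable def opL (L : ℝ → ℝ → Matrix (Fin 2) (Fin 2) ℝ)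
    (γ : ℝ → Fin 2 → ℝ) (x : ℝ) : Fin 2 → ℝ :=
  γ x + ∫ ξ in (0:ℝ)..x, (L x ξ).mulVec (γ ξ)

/-- `ℒ₁[γ](x) = L(x,x) γ(x) + ∫₀ˣ L_x(x,ξ) γ(ξ) dξ`. -/
noncomputable def opL1 (L Lx : ℝ → ℝ → Matrix (Fin 2) (Fin 2) ℝ)
    (γ : ℝ → Fin 2 → ℝ) (x : ℝ) : Fin 2 → ℝ :=
  (L x x).mulVec (γ x) + ∫ ξ in (0:ℝ)..x, (Lx x ξ).mulVec (γ ξ)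

/-- `F₁[γ](x) = Λ_NL(ℒ[γ](x), x)`. -/
noncomputable def Fone (L : ℝ → ℝ → Matrix (Fin 2) (Fin 2) ℝ)
    (Λnl : (Fin 2 → ℝ) → ℝ → Matrix (Fin 2) (Fin 2) ℝ)
    (γ : ℝ → Fin 2 → ℝ) (x : ℝ) : Matrix (Fin 2) (Fin 2) ℝ :=
  Λnl (opL L γ x) x

/-- `F₂[γ](x) = f_NL(ℒ[γ](x), x)`. -/
noncomputable def Ftwo (L : ℝ → ℝ → Matrix (Fin 2) (Fin 2) ℝ)
    (fnl : (Fin 2 → ℝ) → ℝ → (Fin 2 → ℝ))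
    (γ : ℝ → Fin 2 → ℝ) (x : ℝ) : Fin 2 → ℝ :=
  fnl (opL L γ x) x

/-- `F₃[γ,γ_x](x) = 𝒦[F₁[γ] γ_x](x)`. -/
noncomputable def Fthree (K L : ℝ → ℝ → Matrix (Fin 2) (Fin 2) ℝ)
    (Λnl : (Fin 2 → ℝ) → ℝ → Matrix (Fin 2) (Fin 2) ℝ)
    (γ γx : ℝ → Fin 2 → ℝ) (x : ℝ) : Fin 2 → ℝ :=
  opK K (fun y => (Fone L Λnl γ y).mulVec (γx y)) x

/-- `F₄[γ](x) = 𝒦[F₁[γ] ℒ₁[γ] + F₂[γ]](x)`. -/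
noncomputable def Ffour (K L Lx : ℝ → ℝ → Matrix (Fin 2) (Fin 2) ℝ)
    (Λnl : (Fin 2 → ℝ) → ℝ → Matrix (Fin 2) (Fin 2) ℝ)
    (fnl : (Fin 2 → ℝ) → ℝ → (Fin 2 → ℝ))
    (γ : ℝ → Fin 2 → ℝ) (x : ℝ) : Fin 2 → ℝ :=
  opK K (fun y => (Fone L Λnl γ y).mulVec (opL1 L Lx γ y) + Ftwo L fnl γ y) x

section AuxLemmas

noncomputable def ent (M : Matrix (Fin 2) (Fin 2) ℝ) : ℝ :=
  |M 0 0| + |M 0 1| + |M 1 0| + |M 1 1|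

lemma vnorm_nonneg (v : Fin 2 → ℝ) : 0 ≤ vnorm v := by
  unfold vnorm; positivity

lemma ent_nonneg (M : Matrix (Fin 2) (Fin 2) ℝ) : 0 ≤ ent M := by
  unfold ent; positivity

lemma vnorm_add_le (v w : Fin 2 → ℝ) : vnorm (v + w) ≤ vnorm v + vnorm w := by
  simp only [vnorm, Pi.add_apply]
  have := abs_add_le (v 0) (w 0); have := abs_add_le (v 1) (w 1); linarith

lemma vnorm_sub_le (v w : Fin 2 → ℝ) : vnorm (v - w) ≤ vnorm v + vnorm w := by
  simp only [vnorm, Pi.sub_apply]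
  have := abs_sub (v 0) (w 0); have := abs_sub (v 1) (w 1); linarith

lemma norm_le_vnorm (v : Fin 2 → ℝ) : ‖v‖ ≤ vnorm v := by
  rw [pi_norm_le_iff_of_nonneg (vnorm_nonneg v)]
  intro i
  fin_cases i
  · simp only [vnorm, Real.norm_eq_abs]
    exact le_add_of_nonneg_right (abs_nonneg _)
  · simp only [vnorm, Real.norm_eq_abs]
    exact le_add_of_nonneg_left (abs_nonneg _)


lemma vnorm_le_two_norm (v : Fin 2 → ℝ) : vnorm v ≤ 2 * ‖v‖ := by
  have h0 := norm_le_pi_norm v 0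
  have h1 := norm_le_pi_norm v 1
  simp only [Real.norm_eq_abs] at h0 h1
  unfold vnorm; linarith

lemma vnorm_mulVec_le (M : Matrix (Fin 2) (Fin 2) ℝ) (v : Fin 2 → ℝ) :
    vnorm (M.mulVec v) ≤ ent M * vnorm v := by
  have h : ∀ i : Fin 2, |(M.mulVec v) i| ≤ |M i 0| * |v 0| + |M i 1| * |v 1| := by
    intro i
    have : (M.mulVec v) i = M i 0 * v 0 + M i 1 * v 1 := by
      simp [Matrix.mulVec, dotProduct, Fin.sum_univ_two]
    rw [this]
    calc |M i 0 * v 0 + M i 1 * v 1| ≤ |M i 0 * v 0| + |M i 1 * v 1| := abs_add_le _ _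
    _ = |M i 0| * |v 0| + |M i 1| * |v 1| := by rw [abs_mul, abs_mul]
  have h0 := h 0; have h1 := h 1
  have a0 := abs_nonneg (v 0); have a1 := abs_nonneg (v 1)
  have b0 := abs_nonneg (M 0 0); have b1 := abs_nonneg (M 0 1)
  have b2 := abs_nonneg (M 1 0); have b3 := abs_nonneg (M 1 1)
  simp only [vnorm, ent]
  nlinarith

lemma mnorm_le_ent (M : Matrix (Fin 2) (Fin 2) ℝ) : mnorm M ≤ ent M := by
  apply Real.sSup_le
  · rintro r ⟨v, hv, rfl⟩
    calc vnorm (M.mulVec v) ≤ ent M * vnorm v := vnorm_mulVec_le M v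
    _ = ent M := by rw [hv, mul_one]
  · exact ent_nonneg M

lemma tri_compact : IsCompact Tri := by
  have hsub : Tri ⊆ Icc (0:ℝ) 1 ×ˢ Icc (0:ℝ) 1 := by
    rintro ⟨x, ξ⟩ ⟨h1, h2, h3⟩
    exact ⟨⟨le_trans h1 h2, h3⟩, ⟨h1, le_trans h2 h3⟩⟩
  have hcl : IsClosed Tri := by
    have : Tri = {p : ℝ × ℝ | 0 ≤ p.2} ∩ ({p | p.2 ≤ p.1} ∩ {p | p.1 ≤ 1}) := by
      ext p; simp [Tri, and_assoc]
    rw [this]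
    exact (isClosed_le continuous_const continuous_snd).inter
      ((isClosed_le continuous_snd continuous_fst).inter
        (isClosed_le continuous_fst continuous_const))
  exact (isCompact_Icc.prod isCompact_Icc).of_isClosed_subset hcl hsub

lemma ent_bound (A : ℝ → ℝ → Matrix (Fin 2) (Fin 2) ℝ)
    (hA : ∀ i j, ContinuousOn (fun p : ℝ × ℝ => A p.1 p.2 i j) Tri) :
    ∃ C : ℝ, 1 ≤ C ∧ ∀ x ξ : ℝ, 0 ≤ ξ → ξ ≤ x → x ≤ 1 → ent (A x ξ) ≤ C := by
  have h : ∀ i j : Fin 2, ∃ C, ∀ p ∈ Tri, ‖(fun p : ℝ × ℝ => A p.1 p.2 i j) p‖ ≤ C :=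
    fun i j => tri_compact.exists_bound_of_continuousOn (hA i j)
  obtain ⟨C00, h00⟩ := h 0 0
  obtain ⟨C01, h01⟩ := h 0 1
  obtain ⟨C10, h10⟩ := h 1 0
  obtain ⟨C11, h11⟩ := h 1 1
  refine ⟨max 1 (C00 + C01 + C10 + C11), le_max_left _ _, fun x ξ h1 h2 h3 => ?_⟩
  have hm : (x, ξ) ∈ Tri := ⟨h1, h2, h3⟩
  have e00 := h00 _ hm; have e01 := h01 _ hm
  have e10 := h10 _ hm; have e11 := h11 _ hm
  simp only [Real.norm_eq_abs] at e00 e01 e10 e11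
  have : ent (A x ξ) ≤ C00 + C01 + C10 + C11 := by unfold ent; linarith
  exact this.trans (le_max_right _ _)


variable {F : Type*} [NormedAddCommGroup F] [NormedSpace ℝ F]

abbrev SS : Set ((Fin 2 → ℝ) × ℝ) := (univ : Set (Fin 2 → ℝ)) ×ˢ Icc (0:ℝ) 1

lemma uds : UniqueDiffOn ℝ ((univ : Set (Fin 2 → ℝ)) ×ˢ Icc (0:ℝ) 1) :=
  uniqueDiffOn_univ.prod (uniqueDiffOn_Icc zero_lt_one)

lemma norm_inl_le : ‖ContinuousLinearMap.inl ℝ (Fin 2 → ℝ) ℝ‖ ≤ 1 := by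
  apply ContinuousLinearMap.opNorm_le_bound _ zero_le_one
  intro v
  rw [one_mul]
  simp only [ContinuousLinearMap.inl_apply, Prod.norm_def]
  simp [norm_nonneg]

/-- slice derivative -/
lemma slice_hasFDerivAt (g : (Fin 2 → ℝ) × ℝ → F)
    (hg : DifferentiableOn ℝ g ((univ : Set (Fin 2 → ℝ)) ×ˢ Icc (0:ℝ) 1))
    (w : Fin 2 → ℝ) {x : ℝ} (hx : x ∈ Icc (0:ℝ) 1) :
    HasFDerivAt (fun u => g (u, x))
      ((fderivWithin ℝ g ((univ : Set (Fin 2 → ℝ)) ×ˢ Icc (0:ℝ) 1) (w, x)).comp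
        (ContinuousLinearMap.inl ℝ (Fin 2 → ℝ) ℝ)) w := by
  have hmem : (w, x) ∈ SS := ⟨mem_univ _, hx⟩
  have hgd : HasFDerivWithinAt g (fderivWithin ℝ g SS (w, x)) SS (w, x) :=
    (hg (w, x) hmem).hasFDerivWithinAt
  have hι : HasFDerivWithinAt (fun u : Fin 2 → ℝ => (u, x))
      (ContinuousLinearMap.inl ℝ (Fin 2 → ℝ) ℝ) univ w :=
    (hasFDerivAt_prodMk_left w x).hasFDerivWithinAt
  have := HasFDerivWithinAt.comp w hgd hι (fun u _ => by exact ⟨mem_univ _, hx⟩)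
  rw [← hasFDerivWithinAt_univ]
  exact this

lemma key1 (g : (Fin 2 → ℝ) × ℝ → F)
    (hg : ContDiffOn ℝ 2 g ((univ : Set (Fin 2 → ℝ)) ×ˢ Icc (0:ℝ) 1))
    (h0 : ∀ x ∈ Icc (0:ℝ) 1, g (0, x) = 0) :
    ∃ C > (0:ℝ), ∀ w : Fin 2 → ℝ, ‖w‖ ≤ 1 → ∀ x ∈ Icc (0:ℝ) 1, ‖g (w, x)‖ ≤ C * ‖w‖ := by
  set D := fun p => fderivWithin ℝ g SS p with hD
  have hDc : ContinuousOn D SS :=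
    hg.continuousOn_fderivWithin uds (by norm_num)
  have hB : IsCompact ((Metric.closedBall (0 : Fin 2 → ℝ) 1) ×ˢ Icc (0:ℝ) 1) :=
    (isCompact_closedBall _ _).prod isCompact_Icc
  obtain ⟨C, hC⟩ := hB.exists_bound_of_continuousOn
    (hDc.mono (prod_mono_left (subset_univ _)))
  have hC0 : 0 ≤ C := le_trans (norm_nonneg _)
    (hC (0, 0) ⟨Metric.mem_closedBall_self zero_le_one, le_refl 0, zero_le_one⟩)
  refine ⟨C + 1, by positivity, fun w hw x hx => ?_⟩
  have hdiff : DifferentiableOn ℝ g SS := hg.differentiableOn (by norm_num)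
  have hmv := Convex.norm_image_sub_le_of_norm_hasFDerivWithin_le
    (f := fun u => g (u, x))
    (f' := fun u => (D (u, x)).comp (ContinuousLinearMap.inl ℝ (Fin 2 → ℝ) ℝ))
    (s := Metric.closedBall (0 : Fin 2 → ℝ) 1) (C := C)
    (fun u hu => (slice_hasFDerivAt g hdiff u hx).hasFDerivWithinAt)
    (fun u hu => by
      calc ‖(D (u, x)).comp (ContinuousLinearMap.inl ℝ (Fin 2 → ℝ) ℝ)‖
          ≤ ‖D (u, x)‖ * ‖ContinuousLinearMap.inl ℝ (Fin 2 → ℝ) ℝ‖ :=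
            ContinuousLinearMap.opNorm_comp_le _ _
        _ ≤ C * 1 := mul_le_mul (hC (u, x) ⟨hu, hx⟩) norm_inl_le (norm_nonneg _)
            hC0
        _ = C := mul_one C)
    (convex_closedBall _ _)
    (Metric.mem_closedBall_self zero_le_one)
    (by simpa [Metric.mem_closedBall, dist_eq_norm] using hw)
  have hmv' : ‖g (w, x) - g (0, x)‖ ≤ C * ‖w - 0‖ := hmv
  rw [h0 x hx, sub_zero, sub_zero] at hmv'
  calc ‖g (w, x)‖ ≤ C * ‖w‖ := hmv'
    _ ≤ (C + 1) * ‖w‖ := by nlinarith [norm_nonneg w]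

lemma key2 (g : (Fin 2 → ℝ) × ℝ → (Fin 2 → ℝ))
    (hg : ContDiffOn ℝ 2 g ((univ : Set (Fin 2 → ℝ)) ×ˢ Icc (0:ℝ) 1))
    (h0 : ∀ x ∈ Icc (0:ℝ) 1, g (0, x) = 0)
    (hd0 : ∀ x ∈ Icc (0:ℝ) 1, HasFDerivAt (fun w : Fin 2 → ℝ => g (w, x))
      (0 : (Fin 2 → ℝ) →L[ℝ] (Fin 2 → ℝ)) 0) :
    ∃ C > (0:ℝ), ∀ w : Fin 2 → ℝ, ‖w‖ ≤ 1 → ∀ x ∈ Icc (0:ℝ) 1,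
      ‖g (w, x)‖ ≤ C * ‖w‖ ^ 2 := by
  set D := fun p => fderivWithin ℝ g SS p with hDdef
  have hDcd : ContDiffOn ℝ 1 D SS := hg.fderivWithin uds (by norm_num)
  set D2 := fun p => fderivWithin ℝ D SS p with hD2def
  have hD2c : ContinuousOn D2 SS := hDcd.continuousOn_fderivWithin uds le_rfl
  have hB : IsCompact ((Metric.closedBall (0 : Fin 2 → ℝ) 1) ×ˢ Icc (0:ℝ) 1) :=
    (isCompact_closedBall _ _).prod isCompact_Icc
  obtain ⟨C, hC⟩ := hB.exists_bound_of_continuousOn (f := D2)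
    (hD2c.mono (prod_mono_left (subset_univ _)) :
      ContinuousOn D2 ((Metric.closedBall (0 : Fin 2 → ℝ) 1) ×ˢ Icc (0:ℝ) 1))
  have hC0 : 0 ≤ C := le_trans (norm_nonneg _)
    (hC (0, 0) ⟨Metric.mem_closedBall_self zero_le_one, le_refl 0, zero_le_one⟩)
  refine ⟨C + 1, by positivity, fun w hw x hx => ?_⟩
  have hdiff : DifferentiableOn ℝ g SS := hg.differentiableOn (by norm_num)
  have hDdiff : DifferentiableOn ℝ D SS := hDcd.differentiableOn one_ne_zero
  -- step 1 : ‖D (u,x) - D (0,x)‖ ≤ C * ‖u‖ for ‖u‖ ≤ 1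
  have step1 : ∀ u : Fin 2 → ℝ, ‖u‖ ≤ 1 → ‖D (u, x) - D (0, x)‖ ≤ C * ‖u‖ := by
    intro u hu
    have hmv := Convex.norm_image_sub_le_of_norm_hasFDerivWithin_le
      (f := fun v => D (v, x))
      (f' := fun v => (D2 (v, x)).comp (ContinuousLinearMap.inl ℝ (Fin 2 → ℝ) ℝ))
      (s := Metric.closedBall (0 : Fin 2 → ℝ) 1) (C := C)
      (fun v hv => (slice_hasFDerivAt D hDdiff v hx).hasFDerivWithinAt)
      (fun v hv => by
        calc ‖(D2 (v, x)).comp (ContinuousLinearMap.inl ℝ (Fin 2 → ℝ) ℝ)‖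
            ≤ ‖D2 (v, x)‖ * ‖ContinuousLinearMap.inl ℝ (Fin 2 → ℝ) ℝ‖ :=
              ContinuousLinearMap.opNorm_comp_le _ _
          _ ≤ C * 1 := mul_le_mul (hC (v, x) ⟨hv, hx⟩) norm_inl_le (norm_nonneg _) hC0
          _ = C := mul_one C)
      (convex_closedBall _ _)
      (Metric.mem_closedBall_self zero_le_one)
      (by simpa [Metric.mem_closedBall, dist_eq_norm] using hu)
    simpa using hmv
  -- step 2 : the slice derivative at 0 vanishes
  have hzero : (D (0, x)).comp (ContinuousLinearMap.inl ℝ (Fin 2 → ℝ) ℝ) = 0 :=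
    (slice_hasFDerivAt g hdiff 0 hx).unique (hd0 x hx)
  -- step 3 : mean value on closedBall 0 ‖w‖
  have hmv := Convex.norm_image_sub_le_of_norm_hasFDerivWithin_le
    (f := fun u => g (u, x))
    (f' := fun u => (D (u, x)).comp (ContinuousLinearMap.inl ℝ (Fin 2 → ℝ) ℝ))
    (s := Metric.closedBall (0 : Fin 2 → ℝ) ‖w‖) (C := C * ‖w‖)
    (fun u hu => (slice_hasFDerivAt g hdiff u hx).hasFDerivWithinAt)
    (fun u hu => by
      have hun : ‖u‖ ≤ ‖w‖ := by
        have : dist u 0 ≤ ‖w‖ := hu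
        rwa [dist_eq_norm, sub_zero] at this
      have hu1 : ‖u‖ ≤ 1 := hun.trans hw
      calc ‖(D (u, x)).comp (ContinuousLinearMap.inl ℝ (Fin 2 → ℝ) ℝ)‖
          = ‖((D (u, x)) - (D (0, x))).comp (ContinuousLinearMap.inl ℝ (Fin 2 → ℝ) ℝ)‖ := by
            rw [ContinuousLinearMap.sub_comp, hzero, sub_zero]
        _ ≤ ‖D (u, x) - D (0, x)‖ * ‖ContinuousLinearMap.inl ℝ (Fin 2 → ℝ) ℝ‖ :=
            ContinuousLinearMap.opNorm_comp_le _ _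
        _ ≤ (C * ‖u‖) * 1 := mul_le_mul (step1 u hu1) norm_inl_le (norm_nonneg _)
            (by positivity)
        _ = C * ‖u‖ := mul_one _
        _ ≤ C * ‖w‖ := by nlinarith)
    (convex_closedBall _ _)
    (Metric.mem_closedBall_self (norm_nonneg w))
    (show w ∈ Metric.closedBall (0 : Fin 2 → ℝ) ‖w‖ by
      simp [Metric.mem_closedBall, dist_eq_norm])
  have hmv' : ‖g (w, x) - g (0, x)‖ ≤ C * ‖w‖ * ‖w - 0‖ := hmv
  rw [h0 x hx, sub_zero, sub_zero] at hmv'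
  calc ‖g (w, x)‖ ≤ C * ‖w‖ * ‖w‖ := hmv'
    _ = C * ‖w‖ ^ 2 := by ring
    _ ≤ (C + 1) * ‖w‖ ^ 2 := by nlinarith [norm_nonneg w, sq_nonneg ‖w‖]


lemma vnorm_continuousOn {f : ℝ → Fin 2 → ℝ} {s : Set ℝ} (hf : ContinuousOn f s) :
    ContinuousOn (fun t => vnorm (f t)) s := by
  unfold vnorm
  exact (((continuous_apply 0).comp_continuousOn hf).abs).add
    (((continuous_apply 1).comp_continuousOn hf).abs)

lemma vnorm_integral_le (f : ℝ → Fin 2 → ℝ) {x : ℝ} (hx : 0 ≤ x)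
    (hf : ContinuousOn f (Icc 0 x)) :
    vnorm (∫ ξ in (0:ℝ)..x, f ξ) ≤ 2 * ∫ ξ in (0:ℝ)..x, vnorm (f ξ) := by
  have hI : IntervalIntegrable f volume 0 x := by
    apply ContinuousOn.intervalIntegrable
    rwa [uIcc_of_le hx]
  have h1 : vnorm (∫ ξ in (0:ℝ)..x, f ξ) ≤ 2 * ‖∫ ξ in (0:ℝ)..x, f ξ‖ :=
    vnorm_le_two_norm _
  have h2 : ‖∫ ξ in (0:ℝ)..x, f ξ‖ ≤ ∫ ξ in (0:ℝ)..x, ‖f ξ‖ :=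
    intervalIntegral.norm_integral_le_integral_norm hx
  have h3 : (∫ ξ in (0:ℝ)..x, ‖f ξ‖) ≤ ∫ ξ in (0:ℝ)..x, vnorm (f ξ) := by
    apply intervalIntegral.integral_mono_on hx hI.norm
    · apply ContinuousOn.intervalIntegrable
      rw [uIcc_of_le hx]; exact vnorm_continuousOn hf
    · exact fun t ht => norm_le_vnorm (f t)
  linarith

/-- Cauchy–Schwarz on [0,1] for continuous nonnegative functions. -/
lemma cs_int (f g : ℝ → ℝ) (hf : ContinuousOn f (Icc 0 1)) (hg : ContinuousOn g (Icc 0 1))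
    (hf0 : ∀ t ∈ Icc (0:ℝ) 1, 0 ≤ f t) (hg0 : ∀ t ∈ Icc (0:ℝ) 1, 0 ≤ g t) :
    (∫ t in (0:ℝ)..1, f t * g t) ≤
      Real.sqrt (∫ t in (0:ℝ)..1, f t ^ 2) * Real.sqrt (∫ t in (0:ℝ)..1, g t ^ 2) := by
  have hu : uIcc (0:ℝ) 1 = Icc 0 1 := uIcc_of_le zero_le_one
  have hfi : IntervalIntegrable f volume 0 1 := by
    apply ContinuousOn.intervalIntegrable; rw [hu]; exact hf
  have hgi : IntervalIntegrable g volume 0 1 := by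
    apply ContinuousOn.intervalIntegrable; rw [hu]; exact hg
  have hfgi : IntervalIntegrable (fun t => f t * g t) volume 0 1 := by
    apply ContinuousOn.intervalIntegrable; rw [hu]; exact hf.mul hg
  have hf2i : IntervalIntegrable (fun t => f t ^ 2) volume 0 1 := by
    apply ContinuousOn.intervalIntegrable; rw [hu]; exact hf.pow 2
  have hg2i : IntervalIntegrable (fun t => g t ^ 2) volume 0 1 := by
    apply ContinuousOn.intervalIntegrable; rw [hu]; exact hg.pow 2
  set A := ∫ t in (0:ℝ)..1, f t ^ 2 with hA
  set B := ∫ t in (0:ℝ)..1, g t ^ 2 with hB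
  have hA0 : 0 ≤ A := intervalIntegral.integral_nonneg zero_le_one
    (fun t ht => by positivity)
  have hB0 : 0 ≤ B := intervalIntegral.integral_nonneg zero_le_one
    (fun t ht => by positivity)
  have key : ∀ c : ℝ, 0 < c →
      (∫ t in (0:ℝ)..1, f t * g t) ≤ c / 2 * A + 1 / (2 * c) * B := by
    intro c hc
    have hpt : ∀ t ∈ Icc (0:ℝ) 1, f t * g t ≤ c / 2 * f t ^ 2 + 1 / (2 * c) * g t ^ 2 := by
      intro t ht
      rw [← sub_nonneg]
      have heq : c / 2 * f t ^ 2 + 1 / (2 * c) * g t ^ 2 - f t * g t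
          = (c * f t - g t) ^ 2 / (2 * c) := by
        field_simp; ring
      rw [heq]; positivity
    calc (∫ t in (0:ℝ)..1, f t * g t)
        ≤ ∫ t in (0:ℝ)..1, (c / 2 * f t ^ 2 + 1 / (2 * c) * g t ^ 2) :=
          intervalIntegral.integral_mono_on zero_le_one hfgi
            (((hf2i.const_mul _)).add ((hg2i.const_mul _))) hpt
      _ = c / 2 * A + 1 / (2 * c) * B := by
          rw [intervalIntegral.integral_add (hf2i.const_mul _) (hg2i.const_mul _),
            intervalIntegral.integral_const_mul, intervalIntegral.integral_const_mul]
  rcases eq_or_lt_of_le hA0 with hAz | hApos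
  · -- A = 0 : show integral ≤ 0 = RHS
    have hRHS : Real.sqrt A * Real.sqrt B = 0 := by
      rw [← hAz, Real.sqrt_zero, zero_mul]
    rw [hRHS]
    by_contra hlt
    push_neg at hlt
    set I := ∫ t in (0:ℝ)..1, f t * g t
    have hc : 0 < B / I + 1 := by positivity
    have := key (B / I + 1) hc
    rw [← hAz] at this
    have h2 : 1 / (2 * (B / I + 1)) * B < I := by
      rw [div_mul_eq_mul_div, one_mul, div_lt_iff₀ (by positivity)]
      have : B < I * (B / I) + I := by
        rw [mul_div_cancel₀ _ (ne_of_gt hlt)]; linarith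
      nlinarith
    simp only [mul_zero, zero_add] at this
    linarith
  rcases eq_or_lt_of_le hB0 with hBz | hBpos
  · have hRHS : Real.sqrt A * Real.sqrt B = 0 := by
      rw [← hBz, Real.sqrt_zero, mul_zero]
    rw [hRHS]
    by_contra hlt
    push_neg at hlt
    set I := ∫ t in (0:ℝ)..1, f t * g t
    have hc : 0 < I / A := by positivity
    have := key (I / A) hc
    rw [← hBz] at this
    have h2 : I / A / 2 * A = I / 2 := by field_simp
    simp only [mul_zero] at this
    rw [h2] at this
    linarith
  · have hsA : 0 < Real.sqrt A := Real.sqrt_pos.mpr hApos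
    have hsB : 0 < Real.sqrt B := Real.sqrt_pos.mpr hBpos
    have hc : 0 < Real.sqrt B / Real.sqrt A := by positivity
    have := key _ hc
    have hAe : Real.sqrt A ^ 2 = A := Real.sq_sqrt hA0
    have hBe : Real.sqrt B ^ 2 = B := Real.sq_sqrt hB0
    have heq : Real.sqrt B / Real.sqrt A / 2 * A + 1 / (2 * (Real.sqrt B / Real.sqrt A)) * B
        = Real.sqrt A * Real.sqrt B := by
      field_simp
      nlinarith [hAe, hBe]
    linarith [this, heq.symm.le]


noncomputable def clampI (t : ℝ) : ℝ := min (max t 0) 1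

lemma clampI_cont : Continuous clampI := (continuous_id.max continuous_const).min continuous_const

lemma clampI_mem (t : ℝ) : clampI t ∈ Icc (0:ℝ) 1 :=
  ⟨le_min (le_max_right t 0) zero_le_one, min_le_right _ _⟩

lemma clampI_eq {t : ℝ} (ht : t ∈ Icc (0:ℝ) 1) : clampI t = t := by
  unfold clampI
  rw [max_eq_left ht.1, min_eq_left ht.2]

noncomputable def clampT (p : ℝ × ℝ) : ℝ × ℝ := (clampI p.1, min (max p.2 0) (clampI p.1))

lemma clampT_cont : Continuous clampT :=
  (clampI_cont.comp continuous_fst).prodMk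
    (((continuous_snd.max continuous_const)).min (clampI_cont.comp continuous_fst))

lemma clampT_mem (p : ℝ × ℝ) : clampT p ∈ Tri := by
  refine ⟨le_min (le_max_right _ _) (clampI_mem p.1).1, min_le_right _ _, (clampI_mem p.1).2⟩

lemma clampT_eq {p : ℝ × ℝ} (hp : p ∈ Tri) : clampT p = p := by
  obtain ⟨h1, h2, h3⟩ := hp
  unfold clampT
  rw [clampI_eq ⟨h1.trans h2, h3⟩, max_eq_left h1, min_eq_left h2]

lemma mulVec_apply (A : Matrix (Fin 2) (Fin 2) ℝ) (v : Fin 2 → ℝ) (i : Fin 2) :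
    (A.mulVec v) i = A i 0 * v 0 + A i 1 * v 1 := by
  simp [Matrix.mulVec, dotProduct, Fin.sum_univ_two]

/-- Continuity of `x ↦ ∫₀ˣ A(x,ξ) γ(ξ) dξ` on `[0,1]`. -/
lemma cont_param (A : ℝ → ℝ → Matrix (Fin 2) (Fin 2) ℝ)
    (hA : ∀ i j, ContinuousOn (fun p : ℝ × ℝ => A p.1 p.2 i j) Tri)
    (γ : ℝ → Fin 2 → ℝ) (hγ : ContinuousOn γ (Icc 0 1)) :
    ContinuousOn (fun x => ∫ ξ in (0:ℝ)..x, (A x ξ).mulVec (γ ξ)) (Icc (0:ℝ) 1) := by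
  set Ae : Fin 2 → Fin 2 → ℝ × ℝ → ℝ := fun i j p => A (clampT p).1 (clampT p).2 i j with hAe
  have hAec : ∀ i j, Continuous (Ae i j) := fun i j =>
    (hA i j).comp_continuous clampT_cont clampT_mem
  set γ' : ℝ → Fin 2 → ℝ := fun ξ => γ (clampI ξ) with hγ'
  have hγ'c : Continuous γ' := hγ.comp_continuous clampI_cont clampI_mem
  set Fi : ℝ → ℝ → Fin 2 → ℝ := fun x ξ i =>
    Ae i 0 (x, ξ) * γ' ξ 0 + Ae i 1 (x, ξ) * γ' ξ 1 with hFi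
  have hFc : Continuous (Function.uncurry Fi) := by
    apply continuous_pi
    intro i
    exact (((hAec i 0)).mul (((continuous_apply 0).comp hγ'c).comp continuous_snd)).add
      (((hAec i 1)).mul (((continuous_apply 1).comp hγ'c).comp continuous_snd))
  have hcont : Continuous (fun x => ∫ ξ in (0:ℝ)..x, Fi x ξ) :=
    intervalIntegral.continuous_parametric_intervalIntegral_of_continuous hFc continuous_id
  apply (hcont.continuousOn).congr
  intro x hx
  apply intervalIntegral.integral_congr
  intro ξ hξ
  rw [uIcc_of_le hx.1] at hξ
  have hTri : (x, ξ) ∈ Tri := ⟨hξ.1, hξ.2, hx.2⟩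
  have h1 : clampT (x, ξ) = (x, ξ) := clampT_eq hTri
  have h2 : clampI ξ = ξ := clampI_eq ⟨hξ.1, hξ.2.trans hx.2⟩
  funext i
  show ((A x ξ).mulVec (γ ξ)) i = Fi x ξ i
  rw [mulVec_apply]
  simp only [hFi, hAe, hγ', h1, h2]

/-- Slice continuity of `ξ ↦ A(x,ξ) v(ξ)` on `[0,x]`. -/
lemma slice_cont (A : ℝ → ℝ → Matrix (Fin 2) (Fin 2) ℝ)
    (hA : ∀ i j, ContinuousOn (fun p : ℝ × ℝ => A p.1 p.2 i j) Tri)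
    (v : ℝ → Fin 2 → ℝ) (hv : ContinuousOn v (Icc 0 1)) {x : ℝ} (hx : x ∈ Icc (0:ℝ) 1) :
    ContinuousOn (fun ξ => (A x ξ).mulVec (v ξ)) (Icc 0 x) := by
  have hmap : MapsTo (fun ξ : ℝ => (x, ξ)) (Icc 0 x) Tri :=
    fun ξ hξ => ⟨hξ.1, hξ.2, hx.2⟩
  have hsub : Icc (0:ℝ) x ⊆ Icc 0 1 := Icc_subset_Icc le_rfl hx.2
  have hAc : ∀ i j, ContinuousOn (fun ξ : ℝ => A x ξ i j) (Icc 0 x) := fun i j =>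
    (hA i j).comp (Continuous.continuousOn (continuous_const.prodMk continuous_id)) hmap
  have hvc : ∀ i : Fin 2, ContinuousOn (fun ξ => v ξ i) (Icc 0 x) := fun i =>
    (continuous_apply i).comp_continuousOn (hv.mono hsub)
  apply continuousOn_pi.mpr
  intro i
  have : (fun ξ => ((A x ξ).mulVec (v ξ)) i)
      = fun ξ => A x ξ i 0 * v ξ 0 + A x ξ i 1 * v ξ 1 := by
    funext ξ; rw [mulVec_apply]
  rw [this]
  exact ((hAc i 0).mul (hvc 0)).add ((hAc i 1).mul (hvc 1))


lemma contint {f : ℝ → ℝ} (hf : ContinuousOn f (Icc 0 1)) :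
    IntervalIntegrable f volume 0 1 := by
  apply ContinuousOn.intervalIntegrable
  rwa [uIcc_of_le zero_le_one]

lemma mulVec_cont {M : ℝ → Matrix (Fin 2) (Fin 2) ℝ} {v : ℝ → Fin 2 → ℝ} {s : Set ℝ}
    (hM : ∀ i j, ContinuousOn (fun t => M t i j) s) (hv : ContinuousOn v s) :
    ContinuousOn (fun t => (M t).mulVec (v t)) s := by
  apply continuousOn_pi.mpr
  intro i
  have : (fun t => ((M t).mulVec (v t)) i)
      = fun t => M t i 0 * v t 0 + M t i 1 * v t 1 := by
    funext t; rw [mulVec_apply]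
  rw [this]
  exact ((hM i 0).mul ((continuous_apply 0).comp_continuousOn hv)).add
    ((hM i 1).mul ((continuous_apply 1).comp_continuousOn hv))

lemma int_bound (A : ℝ → ℝ → Matrix (Fin 2) (Fin 2) ℝ)
    (hA : ∀ i j, ContinuousOn (fun p : ℝ × ℝ => A p.1 p.2 i j) Tri)
    {C : ℝ} (hC0 : 0 ≤ C) (hC : ∀ x ξ : ℝ, 0 ≤ ξ → ξ ≤ x → x ≤ 1 → ent (A x ξ) ≤ C)
    (v : ℝ → Fin 2 → ℝ) (hv : ContinuousOn v (Icc 0 1))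
    (b : ℝ → ℝ) (hb : ContinuousOn b (Icc 0 1))
    (hvb : ∀ t ∈ Icc (0:ℝ) 1, vnorm (v t) ≤ b t)
    {x : ℝ} (hx : x ∈ Icc (0:ℝ) 1) :
    vnorm (∫ ξ in (0:ℝ)..x, (A x ξ).mulVec (v ξ)) ≤ 2 * (C * ∫ t in (0:ℝ)..1, b t) := by
  have hsub : Icc (0:ℝ) x ⊆ Icc 0 1 := Icc_subset_Icc le_rfl hx.2
  have hsc := slice_cont A hA v hv hx
  have h1 := vnorm_integral_le _ hx.1 hsc
  have hCb : IntervalIntegrable (fun t => C * b t) volume 0 1 :=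
    (contint hb).const_mul C
  have hCbx : IntervalIntegrable (fun t => C * b t) volume 0 x := by
    apply hCb.mono_set
    rw [uIcc_of_le hx.1, uIcc_of_le zero_le_one]
    exact hsub
  have hWi : IntervalIntegrable (fun ξ => vnorm ((A x ξ).mulVec (v ξ))) volume 0 x := by
    apply ContinuousOn.intervalIntegrable
    rw [uIcc_of_le hx.1]
    exact vnorm_continuousOn hsc
  have h2 : (∫ ξ in (0:ℝ)..x, vnorm ((A x ξ).mulVec (v ξ)))
      ≤ ∫ ξ in (0:ℝ)..x, C * b ξ := by
    apply intervalIntegral.integral_mono_on hx.1 hWi hCbx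
    intro ξ hξ
    calc vnorm ((A x ξ).mulVec (v ξ)) ≤ ent (A x ξ) * vnorm (v ξ) := vnorm_mulVec_le _ _
      _ ≤ C * b ξ := mul_le_mul (hC x ξ hξ.1 hξ.2 hx.2) (hvb ξ (hsub hξ))
          (vnorm_nonneg _) hC0
  have h3 : (∫ ξ in (0:ℝ)..x, C * b ξ) ≤ ∫ t in (0:ℝ)..1, C * b t := by
    apply intervalIntegral.integral_mono_interval le_rfl hx.1 hx.2
    · rw [Filter.EventuallyLE, ae_restrict_iff' measurableSet_Ioc]
      apply Filter.Eventually.of_forall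
      intro t ht
      have hbt : 0 ≤ b t := (vnorm_nonneg (v t)).trans (hvb t ⟨ht.1.le, ht.2⟩)
      show 0 ≤ C * b t
      positivity
    · exact hCb
  have h4 : (∫ t in (0:ℝ)..1, C * b t) = C * ∫ t in (0:ℝ)..1, b t :=
    intervalIntegral.integral_const_mul _ _
  linarith

end AuxLemmas
set_option maxHeartbeats 2000000 in
/-- Bounds on the nonlinear functionals F₁, F₂, F₃, F₄ (Lemma B.2). -/
theorem nonlinear_functional_bounds
    (K L Lx : ℝ → ℝ → Matrix (Fin 2) (Fin 2) ℝ)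
    (hK : ∀ i j, ContinuousOn (fun p : ℝ × ℝ => K p.1 p.2 i j) Tri)
    (hL : ∀ i j, ContinuousOn (fun p : ℝ × ℝ => L p.1 p.2 i j) Tri)
    (hLx : ∀ x ξ : ℝ, 0 ≤ ξ → ξ ≤ x → x ≤ 1 → ∀ i j,
      HasDerivWithinAt (fun s => L s ξ i j) (Lx x ξ i j) (Icc ξ 1) x)
    (hLxc : ∀ i j, ContinuousOn (fun p : ℝ × ℝ => Lx p.1 p.2 i j) Tri)
    (Λnl : (Fin 2 → ℝ) → ℝ → Matrix (Fin 2) (Fin 2) ℝ)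
    (hΛreg : ∀ i j, ContDiffOn ℝ 2
      (fun p : (Fin 2 → ℝ) × ℝ => Λnl p.1 p.2 i j) (univ ×ˢ Icc 0 1))
    (hΛ0 : ∀ x ∈ Icc (0:ℝ) 1, Λnl 0 x = 0)
    (fnl : (Fin 2 → ℝ) → ℝ → (Fin 2 → ℝ))
    (hfreg : ∀ i, ContDiffOn ℝ 2
      (fun p : (Fin 2 → ℝ) × ℝ => fnl p.1 p.2 i) (univ ×ˢ Icc 0 1))
    (hf0 : ∀ x ∈ Icc (0:ℝ) 1, fnl 0 x = 0)
    (hdf0 : ∀ x ∈ Icc (0:ℝ) 1,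
      HasFDerivAt (fun w : Fin 2 → ℝ => fnl w x)
        (0 : (Fin 2 → ℝ) →L[ℝ] (Fin 2 → ℝ)) 0) :
    ∃ δ > (0:ℝ), ∃ C₅ > (0:ℝ), ∃ C₆ > (0:ℝ), ∃ C₇ > (0:ℝ), ∃ C₈ > (0:ℝ),
      ∀ γ γx : ℝ → Fin 2 → ℝ,
        ContDiffOn ℝ 1 γ (Icc 0 1) →
        (∀ x ∈ Icc (0:ℝ) 1, HasDerivWithinAt γ (γx x) (Icc 0 1) x) →
        supnorm γ < δ →
        ∀ x ∈ Icc (0:ℝ) 1,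
          mnorm (Fone L Λnl γ x) ≤ C₅ * (vnorm (γ x) + l1norm γ) ∧
          vnorm (Ftwo L fnl γ x) ≤ C₆ * ((vnorm (γ x)) ^ 2 + (l1norm γ) ^ 2) ∧
          vnorm (Fthree K L Λnl γ γx x) ≤
            C₇ * (l2norm γ + vnorm (γ x)) * (l2norm γx + vnorm (γx x)) ∧
          vnorm (Ffour K L Lx Λnl fnl γ x) ≤
            C₈ * ((vnorm (γ x)) ^ 2 + (l2norm γ) ^ 2) := by
  classical
  obtain ⟨MK, hMK1, hMK⟩ := ent_bound K hK
  obtain ⟨ML, hML1, hML⟩ := ent_bound L hL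
  obtain ⟨MLx, hMLx1, hMLx⟩ := ent_bound Lx hLxc
  have hMK0 : (0:ℝ) < MK := lt_of_lt_of_le one_pos hMK1
  have hML0 : (0:ℝ) < ML := lt_of_lt_of_le one_pos hML1
  have hMLx0 : (0:ℝ) < MLx := lt_of_lt_of_le one_pos hMLx1
  obtain ⟨C00, hC00p, hC00⟩ := key1 (fun p : (Fin 2 → ℝ) × ℝ => Λnl p.1 p.2 0 0)
    (hΛreg 0 0) (fun t ht => by simp [hΛ0 t ht])
  obtain ⟨C01, hC01p, hC01⟩ := key1 (fun p : (Fin 2 → ℝ) × ℝ => Λnl p.1 p.2 0 1)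
    (hΛreg 0 1) (fun t ht => by simp [hΛ0 t ht])
  obtain ⟨C10, hC10p, hC10⟩ := key1 (fun p : (Fin 2 → ℝ) × ℝ => Λnl p.1 p.2 1 0)
    (hΛreg 1 0) (fun t ht => by simp [hΛ0 t ht])
  obtain ⟨C11, hC11p, hC11⟩ := key1 (fun p : (Fin 2 → ℝ) × ℝ => Λnl p.1 p.2 1 1)
    (hΛreg 1 1) (fun t ht => by simp [hΛ0 t ht])
  set CΛ := C00 + C01 + C10 + C11 with hCΛdef
  have hCΛp : (0:ℝ) < CΛ := by rw [hCΛdef]; linarith only [hC00p, hC01p, hC10p, hC11p]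
  have hCΛ : ∀ v : Fin 2 → ℝ, ‖v‖ ≤ 1 → ∀ t ∈ Icc (0:ℝ) 1,
      ent (Λnl v t) ≤ CΛ * vnorm v := by
    intro v hv t ht
    have h00 := hC00 v hv t ht
    have h01 := hC01 v hv t ht
    have h10 := hC10 v hv t ht
    have h11 := hC11 v hv t ht
    simp only [Real.norm_eq_abs] at h00 h01 h10 h11
    have hwv := norm_le_vnorm v
    have hw0 := norm_nonneg v
    have hle : ‖v‖ * (C00 + C01 + C10 + C11) ≤ vnorm v * (C00 + C01 + C10 + C11) :=
      mul_le_mul_of_nonneg_right hwv (by linarith only [hC00p, hC01p, hC10p, hC11p])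
    have h : |Λnl v t 0 0| + |Λnl v t 0 1| + |Λnl v t 1 0| + |Λnl v t 1 1|
        ≤ CΛ * vnorm v := by
      rw [hCΛdef]
      nlinarith only [h00, h01, h10, h11, hle]
    exact h
  obtain ⟨Cf0, hCf0p, hCf0⟩ := key2 (fun p : (Fin 2 → ℝ) × ℝ => fnl p.1 p.2)
    (contDiffOn_pi.mpr hfreg) hf0 hdf0
  set Cf := 2 * Cf0 with hCfdef
  have hCfp : (0:ℝ) < Cf := by rw [hCfdef]; linarith only [hCf0p]
  have hCf : ∀ v : Fin 2 → ℝ, ‖v‖ ≤ 1 → ∀ t ∈ Icc (0:ℝ) 1,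
      vnorm (fnl v t) ≤ Cf * vnorm v ^ 2 := by
    intro v hv t ht
    have h := hCf0 v hv t ht
    have h2 := vnorm_le_two_norm (fnl v t)
    have h3 : ‖v‖ ^ 2 ≤ vnorm v ^ 2 := pow_le_pow_left₀ (norm_nonneg v) (norm_le_vnorm v) 2
    calc vnorm (fnl v t) ≤ 2 * ‖fnl v t‖ := h2
      _ ≤ 2 * (Cf0 * ‖v‖ ^ 2) := by linarith only [h]
      _ ≤ Cf * vnorm v ^ 2 := by
          rw [hCfdef]
          have h4 := mul_le_mul_of_nonneg_left h3 hCf0p.le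
          linarith only [h4]
  set δ := 1 / (2 * (1 + 2 * ML)) with hδdef
  have hδp : (0:ℝ) < δ := by rw [hδdef]; positivity
  set s4 := 1 + 2 * ML + 2 * MLx with hs4def
  have hs4p : (0:ℝ) < s4 := by rw [hs4def]; linarith only [hML1, hMLx1]
  set Cu := (CΛ + Cf) * s4 ^ 2 with hCudef
  have hCup : (0:ℝ) < Cu := by rw [hCudef]; exact mul_pos (by linarith only [hCΛp, hCfp]) (pow_pos hs4p 2)
  set C₅ := CΛ * (1 + 2 * ML) with hC₅def
  set C₆ := 2 * Cf * (1 + 2 * ML) ^ 2 with hC₆def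
  set C₇ := 2 * CΛ * (1 + 2 * ML) * (1 + 2 * MK) with hC₇def
  set C₈ := Cu * (2 + 8 * MK) with hC₈def
  have hC₅p : (0:ℝ) < C₅ := by rw [hC₅def]; exact mul_pos hCΛp (by linarith only [hML1])
  have hC₆p : (0:ℝ) < C₆ := by rw [hC₆def]; exact mul_pos (by linarith only [hCfp]) (pow_pos (by linarith only [hML1]) 2)
  have hC₇p : (0:ℝ) < C₇ := by rw [hC₇def]; exact mul_pos (mul_pos (by linarith only [hCΛp]) (by linarith only [hML1])) (by linarith only [hMK1])
  have hC₈p : (0:ℝ) < C₈ := by rw [hC₈def]; exact mul_pos hCup (by linarith only [hMK1])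
  refine ⟨δ, hδp, C₅, hC₅p, C₆, hC₆p, C₇, hC₇p, C₈, hC₈p, ?_⟩
  intro γ γx hγ hγxd hsup x hx
  -- basic continuity
  have hγc : ContinuousOn γ (Icc 0 1) := hγ.continuousOn
  have hγxc : ContinuousOn γx (Icc 0 1) := by
    have h1 : ContinuousOn (derivWithin γ (Icc 0 1)) (Icc 0 1) :=
      hγ.continuousOn_derivWithin uniqueDiffOn_Icc_zero_one le_rfl
    exact h1.congr (fun t ht => ((hγxd t ht).derivWithin (uniqueDiffOn_Icc_zero_one t ht)).symm)
  set vγ : ℝ → ℝ := fun t => vnorm (γ t) with hvγdef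
  set vγx : ℝ → ℝ := fun t => vnorm (γx t) with hvγxdef
  have hvγc : ContinuousOn vγ (Icc 0 1) := vnorm_continuousOn hγc
  have hvγxc : ContinuousOn vγx (Icc 0 1) := vnorm_continuousOn hγxc
  have hvγ0 : ∀ t, 0 ≤ vγ t := fun t => vnorm_nonneg _
  have hvγx0 : ∀ t, 0 ≤ vγx t := fun t => vnorm_nonneg _
  set l1 := l1norm γ with hl1def
  have hl1eq : l1 = ∫ t in (0:ℝ)..1, vγ t := rfl
  have hl10 : 0 ≤ l1 := by
    rw [hl1eq]
    exact intervalIntegral.integral_nonneg zero_le_one (fun t _ => hvγ0 t)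
  set p := l2norm γ with hpdef
  set q := l2norm γx with hqdef
  have hp0 : 0 ≤ p := Real.sqrt_nonneg _
  have hq0 : 0 ≤ q := Real.sqrt_nonneg _
  have hp2 : p ^ 2 = ∫ t in (0:ℝ)..1, vγ t ^ 2 := Real.sq_sqrt
    (intervalIntegral.integral_nonneg zero_le_one (fun t _ => sq_nonneg _))
  -- Cauchy-Schwarz facts
  have hCS1 : (∫ t in (0:ℝ)..1, vγ t * vγx t) ≤ p * q :=
    cs_int vγ vγx hvγc hvγxc (fun t _ => hvγ0 t) (fun t _ => hvγx0 t)
  have hone : Real.sqrt (∫ t in (0:ℝ)..1, (1:ℝ) ^ 2) = 1 := by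
    simp
  have hCS2 : (∫ t in (0:ℝ)..1, vγx t) ≤ q := by
    have h := cs_int vγx (fun _ => 1) hvγxc continuousOn_const
      (fun t _ => hvγx0 t) (fun t _ => zero_le_one)
    rw [hone, mul_one] at h
    calc (∫ t in (0:ℝ)..1, vγx t) = ∫ t in (0:ℝ)..1, vγx t * 1 := by simp
      _ ≤ q := h
  have hl1p : l1 ≤ p := by
    have h := cs_int vγ (fun _ => 1) hvγc continuousOn_const
      (fun t _ => hvγ0 t) (fun t _ => zero_le_one)
    rw [hone, mul_one] at h
    calc l1 = ∫ t in (0:ℝ)..1, vγ t * 1 := by rw [hl1eq]; simp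
      _ ≤ p := h
  have hSx0 : 0 ≤ ∫ t in (0:ℝ)..1, vγx t :=
    intervalIntegral.integral_nonneg zero_le_one (fun t _ => hvγx0 t)
  -- supremum facts
  have hbdd : BddAbove (range fun t : Icc (0:ℝ) 1 => vnorm (γ ↑t)) := by
    have himg : IsCompact ((fun t => vnorm (γ t)) '' Icc (0:ℝ) 1) :=
      isCompact_Icc.image_of_continuousOn (vnorm_continuousOn hγc)
    have heq : (range fun t : Icc (0:ℝ) 1 => vnorm (γ ↑t))
        = (fun t => vnorm (γ t)) '' Icc (0:ℝ) 1 := by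
      ext y
      constructor
      · rintro ⟨⟨t, ht⟩, rfl⟩; exact ⟨t, ht, rfl⟩
      · rintro ⟨t, ht, rfl⟩; exact ⟨⟨t, ht⟩, rfl⟩
    rw [heq]
    exact himg.bddAbove
  have hsup_pt : ∀ t ∈ Icc (0:ℝ) 1, vγ t ≤ supnorm γ := fun t ht =>
    le_ciSup hbdd (⟨t, ht⟩ : Icc (0:ℝ) 1)
  have hsup0 : 0 ≤ supnorm γ := le_trans (hvγ0 0) (hsup_pt 0 ⟨le_rfl, zero_le_one⟩)
  have hl1sup : l1 ≤ supnorm γ := by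
    rw [hl1eq]
    have hstep : (∫ t in (0:ℝ)..1, vγ t) ≤ ∫ t in (0:ℝ)..1, supnorm γ :=
      intervalIntegral.integral_mono_on zero_le_one (contint hvγc)
        intervalIntegrable_const hsup_pt
    have : (∫ t in (0:ℝ)..1, supnorm γ) = supnorm γ := by simp
    linarith only [hstep, this]
  have hvγδ : ∀ t ∈ Icc (0:ℝ) 1, vγ t ≤ δ := fun t ht => (hsup_pt t ht).trans hsup.le
  have hl1δ : l1 ≤ δ := hl1sup.trans hsup.le
  -- the transformed map w = ℒ[γ]
  set w : ℝ → Fin 2 → ℝ := opL L γ with hwdef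
  have hwc : ContinuousOn w (Icc 0 1) := by
    rw [hwdef]
    unfold opL
    exact hγc.add (cont_param L hL γ hγc)
  have hwb : ∀ t ∈ Icc (0:ℝ) 1, vnorm (w t) ≤ vγ t + 2 * (ML * l1) := by
    intro t ht
    have h2 := int_bound L hL (by linarith only [hML1]) hML γ hγc vγ hvγc (fun s _ => le_rfl) ht
    calc vnorm (w t) = vnorm (γ t + ∫ ξ in (0:ℝ)..t, (L t ξ).mulVec (γ ξ)) := rfl
      _ ≤ vγ t + vnorm (∫ ξ in (0:ℝ)..t, (L t ξ).mulVec (γ ξ)) := vnorm_add_le _ _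
      _ ≤ vγ t + 2 * (ML * l1) := by rw [hl1eq]; linarith only [h2]
  have hw1 : ∀ t ∈ Icc (0:ℝ) 1, ‖w t‖ ≤ 1 := by
    intro t ht
    have h1 := hwb t ht
    have h2 := hvγδ t ht
    have h3 := hl1δ
    have h4 : 2 * (ML * l1) ≤ 2 * (ML * δ) := by
      have := mul_le_mul_of_nonneg_left h3 hML0.le
      linarith only [this]
    have hδval : 2 * δ + 4 * (ML * δ) = 1 := by
      rw [hδdef]; field_simp; ring
    have h5 : vnorm (w t) ≤ 1 := by linarith only [h1, h2, h4, hδval, h3]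
    exact (norm_le_vnorm (w t)).trans h5
  have hentw : ∀ t ∈ Icc (0:ℝ) 1, ent (Λnl (w t) t) ≤ CΛ * (vγ t + 2 * (ML * l1)) :=
    fun t ht => (hCΛ (w t) (hw1 t ht) t ht).trans
      (mul_le_mul_of_nonneg_left (hwb t ht) hCΛp.le)
  -- continuity of composed maps
  have hwprod : ContinuousOn (fun t : ℝ => (w t, t)) (Icc 0 1) :=
    hwc.prodMk continuousOn_id
  have hmapsS : MapsTo (fun t : ℝ => (w t, t)) (Icc (0:ℝ) 1)
      ((univ : Set (Fin 2 → ℝ)) ×ˢ Icc (0:ℝ) 1) := fun t ht => ⟨mem_univ _, ht⟩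
  have hΛwc : ∀ i j, ContinuousOn (fun t => Λnl (w t) t i j) (Icc 0 1) :=
    fun i j => (hΛreg i j).continuousOn.comp hwprod hmapsS
  have hfwc : ContinuousOn (fun t => fnl (w t) t) (Icc 0 1) := by
    apply continuousOn_pi.mpr
    intro i
    exact (hfreg i).continuousOn.comp hwprod hmapsS
  refine ⟨?_, ?_, ?_, ?_⟩
  -- ∙ Bound for F₁
  · show mnorm (Λnl (w x) x) ≤ C₅ * (vγ x + l1)
    calc mnorm (Λnl (w x) x) ≤ ent (Λnl (w x) x) := mnorm_le_ent _
      _ ≤ CΛ * (vγ x + 2 * (ML * l1)) := hentw x hx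
      _ ≤ C₅ * (vγ x + l1) := by
          rw [hC₅def, mul_assoc]
          refine mul_le_mul_of_nonneg_left ?_ hCΛp.le
          nlinarith only [mul_nonneg hML0.le (hvγ0 x), hl10]
  -- ∙ Bound for F₂
  · show vnorm (fnl (w x) x) ≤ C₆ * (vγ x ^ 2 + l1 ^ 2)
    have h1 : vnorm (fnl (w x) x) ≤ Cf * vnorm (w x) ^ 2 := hCf _ (hw1 x hx) x hx
    have h2 : vnorm (w x) ^ 2 ≤ (vγ x + 2 * (ML * l1)) ^ 2 :=
      pow_le_pow_left₀ (vnorm_nonneg _) (hwb x hx) 2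
    have h3 : Cf * vnorm (w x) ^ 2 ≤ Cf * (vγ x + 2 * (ML * l1)) ^ 2 :=
      mul_le_mul_of_nonneg_left h2 hCfp.le
    have k1 : (vγ x + 2 * (ML * l1)) ^ 2 ≤ 2 * (1 + 2 * ML) ^ 2 * (vγ x ^ 2 + l1 ^ 2) := by
      nlinarith only [mul_nonneg hML0.le (sq_nonneg (vγ x - l1)), sq_nonneg (vγ x),
        sq_nonneg l1, mul_nonneg hML0.le (sq_nonneg (vγ x)),
        mul_nonneg hML0.le (sq_nonneg l1),
        mul_nonneg (mul_nonneg hML0.le hML0.le) (sq_nonneg (vγ x)),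
        mul_nonneg (mul_nonneg hML0.le hML0.le) (sq_nonneg l1)]
    have h4 : Cf * (vγ x + 2 * (ML * l1)) ^ 2 ≤ C₆ * (vγ x ^ 2 + l1 ^ 2) := by
      have h5 := mul_le_mul_of_nonneg_left k1 hCfp.le
      have h6 : Cf * (2 * (1 + 2 * ML) ^ 2 * (vγ x ^ 2 + l1 ^ 2))
          = C₆ * (vγ x ^ 2 + l1 ^ 2) := by rw [hC₆def]; ring
      linarith only [h5, h6]
    linarith only [h1, h3, h4]
  -- ∙ Bound for F₃
  · set h3f : ℝ → Fin 2 → ℝ := fun t => (Λnl (w t) t).mulVec (γx t) with hh3def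
    have hh3c : ContinuousOn h3f (Icc 0 1) := mulVec_cont hΛwc hγxc
    set b3 : ℝ → ℝ := fun t => CΛ * (vγ t * vγx t) + (CΛ * (2 * (ML * l1))) * vγx t
      with hb3def
    have hb3c : ContinuousOn b3 (Icc 0 1) :=
      (continuousOn_const.mul (hvγc.mul hvγxc)).add (continuousOn_const.mul hvγxc)
    have hh3b : ∀ t ∈ Icc (0:ℝ) 1, vnorm (h3f t) ≤ b3 t := by
      intro t ht
      have h1 : vnorm (h3f t) ≤ ent (Λnl (w t) t) * vnorm (γx t) := vnorm_mulVec_le _ _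
      have h2 := mul_le_mul_of_nonneg_right (hentw t ht) (hvγx0 t)
      calc vnorm (h3f t) ≤ ent (Λnl (w t) t) * vγx t := h1
        _ ≤ CΛ * (vγ t + 2 * (ML * l1)) * vγx t := h2
        _ = b3 t := by rw [hb3def]; ring
    have hIb3 := int_bound K hK (by linarith only [hMK1]) hMK h3f hh3c b3 hb3c hh3b hx
    have hi1 : IntervalIntegrable (fun t => vγ t * vγx t) volume 0 1 :=
      contint (hvγc.mul hvγxc)
    have hi2 : IntervalIntegrable vγx volume 0 1 := contint hvγxc
    have hintb3 : (∫ t in (0:ℝ)..1, b3 t)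
        = CΛ * (∫ t in (0:ℝ)..1, vγ t * vγx t)
          + (CΛ * (2 * (ML * l1))) * ∫ t in (0:ℝ)..1, vγx t := by
      rw [hb3def]
      rw [intervalIntegral.integral_add (hi1.const_mul _) (hi2.const_mul _),
        intervalIntegral.integral_const_mul, intervalIntegral.integral_const_mul]
    show vnorm (h3f x - ∫ ξ in (0:ℝ)..x, (K x ξ).mulVec (h3f ξ))
      ≤ C₇ * (p + vγ x) * (q + vγx x)
    have hstep : vnorm (h3f x - ∫ ξ in (0:ℝ)..x, (K x ξ).mulVec (h3f ξ))
        ≤ b3 x + 2 * (MK * ∫ t in (0:ℝ)..1, b3 t) := by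
      have := vnorm_sub_le (h3f x) (∫ ξ in (0:ℝ)..x, (K x ξ).mulVec (h3f ξ))
      have h2 := hh3b x hx
      linarith only [this, h2, hIb3]
    rw [hintb3] at hstep
    -- now pure arithmetic
    have e1 : CΛ * (2 * (ML * l1)) * vγx x ≤ CΛ * (2 * (ML * p)) * vγx x := by
      have h1 : CΛ * (2 * (ML * l1)) ≤ CΛ * (2 * (ML * p)) := by
        calc CΛ * (2 * (ML * l1)) = CΛ * 2 * ML * l1 := by ring
          _ ≤ CΛ * 2 * ML * p := mul_le_mul_of_nonneg_left hl1p
              (mul_nonneg (mul_nonneg hCΛp.le (by norm_num)) hML0.le)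
          _ = CΛ * (2 * (ML * p)) := by ring
      exact mul_le_mul_of_nonneg_right h1 (hvγx0 x)
    have e2 : CΛ * (∫ t in (0:ℝ)..1, vγ t * vγx t) ≤ CΛ * (p * q) :=
      mul_le_mul_of_nonneg_left hCS1 hCΛp.le
    have e3 : CΛ * (2 * (ML * l1)) * (∫ t in (0:ℝ)..1, vγx t)
        ≤ CΛ * (2 * (ML * p)) * q := by
      apply mul_le_mul _ hCS2 hSx0 _
      · calc CΛ * (2 * (ML * l1)) = CΛ * 2 * ML * l1 := by ring
          _ ≤ CΛ * 2 * ML * p := mul_le_mul_of_nonneg_left hl1p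
              (mul_nonneg (mul_nonneg hCΛp.le (by norm_num)) hML0.le)
          _ = CΛ * (2 * (ML * p)) := by ring
      · exact mul_nonneg hCΛp.le (mul_nonneg (by norm_num) (mul_nonneg hML0.le hp0))
    have hb3x : b3 x = CΛ * (vγ x * vγx x) + CΛ * (2 * (ML * l1)) * vγx x := by
      rw [hb3def]
    set c3 := CΛ * (1 + 2 * ML) with hc3def
    have hc30 : 0 ≤ c3 := by rw [hc3def]; positivity
    set P := (p + vγ x) * (q + vγx x) with hPdef
    have hP0 : 0 ≤ P := by
      rw [hPdef]; exact mul_nonneg (by linarith only [hp0, hvγ0 x]) (by linarith only [hq0, hvγx0 x])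
    have hm1 : vγ x * vγx x ≤ P := by
      rw [hPdef]
      nlinarith only [mul_nonneg hp0 (hvγx0 x), mul_nonneg (hvγ0 x) hq0, mul_nonneg hp0 hq0]
    have hm2 : p * vγx x ≤ P := by
      rw [hPdef]
      nlinarith only [mul_nonneg (hvγ0 x) (hvγx0 x), mul_nonneg (hvγ0 x) hq0, mul_nonneg hp0 hq0]
    have hm3 : p * q ≤ P := by
      rw [hPdef]
      nlinarith only [mul_nonneg (hvγ0 x) (hvγx0 x), mul_nonneg (hvγ0 x) hq0,
        mul_nonneg hp0 (hvγx0 x)]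
    have r1 : CΛ * (vγ x * vγx x) ≤ c3 * P := by
      apply mul_le_mul _ hm1 (mul_nonneg (hvγ0 x) (hvγx0 x)) hc30
      rw [hc3def]; nlinarith only [hCΛp, mul_nonneg hCΛp.le hML0.le]
    have r2 : CΛ * (2 * (ML * p)) * vγx x ≤ 2 * (c3 * P) := by
      have h1 : CΛ * (2 * (ML * p)) * vγx x = (2 * (CΛ * ML)) * (p * vγx x) := by ring
      have h2 : (2 * (CΛ * ML)) * (p * vγx x) ≤ (2 * c3) * P := by
        apply mul_le_mul _ hm2 (mul_nonneg hp0 (hvγx0 x)) (by linarith only [hc30])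
        rw [hc3def]; nlinarith only [hCΛp, mul_nonneg hCΛp.le hML0.le]
      rw [h1]; linarith only [h2]
    have r3inner : CΛ * (p * q) + CΛ * (2 * (ML * p)) * q = c3 * (p * q) := by
      rw [hc3def]; ring
    have r3 : 2 * (MK * (CΛ * (p * q) + CΛ * (2 * (ML * p)) * q)) ≤ 2 * (MK * (c3 * P)) := by
      rw [r3inner]
      have h1 : c3 * (p * q) ≤ c3 * P := mul_le_mul_of_nonneg_left hm3 hc30
      have h2 := mul_le_mul_of_nonneg_left h1 hMK0.le
      linarith only [h2]
    have hC₇eq : C₇ * (p + vγ x) * (q + vγx x) = 2 * (c3 * P) + 4 * (MK * (c3 * P)) := by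
      rw [hC₇def, hc3def, hPdef]; ring
    have hMKc3P : 0 ≤ MK * (c3 * P) := mul_nonneg hMK0.le (mul_nonneg hc30 hP0)
    have hc3P : 0 ≤ c3 * P := mul_nonneg hc30 hP0
    rw [hb3x] at hstep
    have echain := add_le_add (add_le_add (le_refl (CΛ * (vγ x * vγx x))) e1)
      (le_refl (2 * (MK * (CΛ * (∫ t in (0:ℝ)..1, vγ t * vγx t)
        + CΛ * (2 * (ML * l1)) * ∫ t in (0:ℝ)..1, vγx t))))
    have e4 : 2 * (MK * (CΛ * (∫ t in (0:ℝ)..1, vγ t * vγx t)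
        + CΛ * (2 * (ML * l1)) * ∫ t in (0:ℝ)..1, vγx t))
        ≤ 2 * (MK * (CΛ * (p * q) + CΛ * (2 * (ML * p)) * q)) := by
      have h := mul_le_mul_of_nonneg_left (add_le_add e2 e3) hMK0.le
      linarith only [h]
    calc vnorm (h3f x - ∫ ξ in (0:ℝ)..x, (K x ξ).mulVec (h3f ξ))
        ≤ CΛ * (vγ x * vγx x) + CΛ * (2 * (ML * l1)) * vγx x
          + 2 * (MK * (CΛ * (∫ t in (0:ℝ)..1, vγ t * vγx t)
            + CΛ * (2 * (ML * l1)) * ∫ t in (0:ℝ)..1, vγx t)) := hstep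
      _ ≤ CΛ * (vγ x * vγx x) + CΛ * (2 * (ML * p)) * vγx x
          + 2 * (MK * (CΛ * (p * q) + CΛ * (2 * (ML * p)) * q)) := by linarith only [e1, e4]
      _ ≤ c3 * P + 2 * (c3 * P) + 2 * (MK * (c3 * P)) := by linarith only [r1, r2, r3]
      _ ≤ 2 * (c3 * P) + 4 * (MK * (c3 * P)) := by
          linarith only [mul_le_mul_of_nonneg_right hMK1 hc3P, hMKc3P]
      _ = C₇ * (p + vγ x) * (q + vγx x) := hC₇eq.symm
  -- ∙ Bound for F₄
  · have hdiagL : ∀ i j, ContinuousOn (fun t : ℝ => L t t i j) (Icc 0 1) := by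
      intro i j
      exact (hL i j).comp ((continuous_id.prodMk continuous_id).continuousOn)
        (fun t ht => ⟨ht.1, le_rfl, ht.2⟩)
    have hopL1c : ContinuousOn (opL1 L Lx γ) (Icc 0 1) := by
      unfold opL1
      exact (mulVec_cont hdiagL hγc).add (cont_param Lx hLxc γ hγc)
    set u : ℝ → Fin 2 → ℝ :=
      fun t => (Λnl (w t) t).mulVec (opL1 L Lx γ t) + fnl (w t) t with hudef
    have huc : ContinuousOn u (Icc 0 1) := (mulVec_cont hΛwc hopL1c).add hfwc
    have hopL1b : ∀ t ∈ Icc (0:ℝ) 1,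
        vnorm (opL1 L Lx γ t) ≤ ML * vγ t + 2 * (MLx * l1) := by
      intro t ht
      have h1 : vnorm ((L t t).mulVec (γ t)) ≤ ML * vγ t :=
        (vnorm_mulVec_le _ _).trans
          (mul_le_mul_of_nonneg_right (hML t t ht.1 le_rfl ht.2) (hvγ0 t))
      have h2 := int_bound Lx hLxc (by linarith only [hMLx1]) hMLx γ hγc vγ hvγc (fun s _ => le_rfl) ht
      calc vnorm (opL1 L Lx γ t)
          = vnorm ((L t t).mulVec (γ t) + ∫ ξ in (0:ℝ)..t, (Lx t ξ).mulVec (γ ξ)) := rfl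
        _ ≤ vnorm ((L t t).mulVec (γ t))
            + vnorm (∫ ξ in (0:ℝ)..t, (Lx t ξ).mulVec (γ ξ)) := vnorm_add_le _ _
        _ ≤ ML * vγ t + 2 * (MLx * l1) := by rw [hl1eq]; linarith only [h1, h2]
    set b4 : ℝ → ℝ := fun t => Cu * vγ t ^ 2 + (2 * Cu * l1) * vγ t + Cu * l1 ^ 2
      with hb4def
    have hb4c : ContinuousOn b4 (Icc 0 1) :=
      ((continuousOn_const.mul (hvγc.pow 2)).add (continuousOn_const.mul hvγc)).add
        continuousOn_const
    have hub : ∀ t ∈ Icc (0:ℝ) 1, vnorm (u t) ≤ b4 t := by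
      intro t ht
      have hY0 : 0 ≤ ML * vγ t + 2 * (MLx * l1) :=
        add_nonneg (mul_nonneg hML0.le (hvγ0 t))
          (mul_nonneg (by norm_num) (mul_nonneg hMLx0.le hl10))
      have hX0 : 0 ≤ vγ t + 2 * (ML * l1) :=
        add_nonneg (hvγ0 t) (mul_nonneg (by norm_num) (mul_nonneg hML0.le hl10))
      have h1 : vnorm ((Λnl (w t) t).mulVec (opL1 L Lx γ t))
          ≤ (CΛ * (vγ t + 2 * (ML * l1))) * (ML * vγ t + 2 * (MLx * l1)) :=
        (vnorm_mulVec_le _ _).trans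
          (mul_le_mul (hentw t ht) (hopL1b t ht) (vnorm_nonneg _)
            (mul_nonneg hCΛp.le hX0))
      have h2 : vnorm (fnl (w t) t) ≤ Cf * (vγ t + 2 * (ML * l1)) ^ 2 :=
        (hCf _ (hw1 t ht) t ht).trans
          (mul_le_mul_of_nonneg_left (pow_le_pow_left₀ (vnorm_nonneg _) (hwb t ht) 2) hCfp.le)
      have hX : vγ t + 2 * (ML * l1) ≤ s4 * (vγ t + l1) := by
        rw [hs4def]
        nlinarith only [hl10, hvγ0 t, mul_nonneg hML0.le (hvγ0 t),
          mul_nonneg hMLx0.le (hvγ0 t), mul_nonneg hMLx0.le hl10,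
          mul_nonneg hML0.le hl10]
      have hY : ML * vγ t + 2 * (MLx * l1) ≤ s4 * (vγ t + l1) := by
        rw [hs4def]
        nlinarith only [hl10, hvγ0 t, mul_nonneg hML0.le (hvγ0 t),
          mul_nonneg hMLx0.le (hvγ0 t), mul_nonneg hMLx0.le hl10,
          mul_nonneg hML0.le hl10]
      have hZ0 : 0 ≤ s4 * (vγ t + l1) := mul_nonneg hs4p.le (add_nonneg (hvγ0 t) hl10)
      have h3 : (CΛ * (vγ t + 2 * (ML * l1))) * (ML * vγ t + 2 * (MLx * l1))
          ≤ CΛ * ((s4 * (vγ t + l1)) * (s4 * (vγ t + l1))) := by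
        have := mul_le_mul (mul_le_mul_of_nonneg_left hX hCΛp.le) hY hY0
          (mul_nonneg hCΛp.le hZ0)
        calc (CΛ * (vγ t + 2 * (ML * l1))) * (ML * vγ t + 2 * (MLx * l1))
            ≤ CΛ * (s4 * (vγ t + l1)) * (s4 * (vγ t + l1)) := this
          _ = CΛ * ((s4 * (vγ t + l1)) * (s4 * (vγ t + l1))) := by ring
      have h4 : Cf * (vγ t + 2 * (ML * l1)) ^ 2 ≤ Cf * (s4 * (vγ t + l1)) ^ 2 :=
        mul_le_mul_of_nonneg_left (pow_le_pow_left₀ hX0 hX 2) hCfp.le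
      have h5 : vnorm (u t) ≤ vnorm ((Λnl (w t) t).mulVec (opL1 L Lx γ t))
          + vnorm (fnl (w t) t) := vnorm_add_le _ _
      have h6 : CΛ * ((s4 * (vγ t + l1)) * (s4 * (vγ t + l1)))
          + Cf * (s4 * (vγ t + l1)) ^ 2 = b4 t := by
        rw [hb4def, hCudef]; ring
      linarith only [h1, h2, h3, h4, h5, h6]
    have hIb4 := int_bound K hK (by linarith only [hMK1]) hMK u huc b4 hb4c hub hx
    have hi1 : IntervalIntegrable (fun t => vγ t ^ 2) volume 0 1 := contint (hvγc.pow 2)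
    have hi2 : IntervalIntegrable vγ volume 0 1 := contint hvγc
    have hintb4 : (∫ t in (0:ℝ)..1, b4 t)
        = Cu * (∫ t in (0:ℝ)..1, vγ t ^ 2) + (2 * Cu * l1) * (∫ t in (0:ℝ)..1, vγ t)
          + Cu * l1 ^ 2 := by
      rw [hb4def]
      rw [intervalIntegral.integral_add ((hi1.const_mul _).add (hi2.const_mul _))
        intervalIntegrable_const,
        intervalIntegral.integral_add (hi1.const_mul _) (hi2.const_mul _),
        intervalIntegral.integral_const_mul, intervalIntegral.integral_const_mul]
      simp
    rw [← hp2, ← hl1eq] at hintb4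
    show vnorm (u x - ∫ ξ in (0:ℝ)..x, (K x ξ).mulVec (u ξ)) ≤ C₈ * (vγ x ^ 2 + p ^ 2)
    have hstep : vnorm (u x - ∫ ξ in (0:ℝ)..x, (K x ξ).mulVec (u ξ))
        ≤ b4 x + 2 * (MK * ∫ t in (0:ℝ)..1, b4 t) := by
      have := vnorm_sub_le (u x) (∫ ξ in (0:ℝ)..x, (K x ξ).mulVec (u ξ))
      have h2 := hub x hx
      linarith only [this, h2, hIb4]
    rw [hintb4] at hstep
    have hb4x : b4 x = Cu * vγ x ^ 2 + (2 * Cu * l1) * vγ x + Cu * l1 ^ 2 := by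
      rw [hb4def]
    rw [hb4x] at hstep
    have hl1p2 : l1 ^ 2 ≤ p ^ 2 := pow_le_pow_left₀ hl10 hl1p 2
    have h2al : 2 * (Cu * (l1 * vγ x)) ≤ Cu * vγ x ^ 2 + Cu * l1 ^ 2 := by
      nlinarith only [mul_nonneg hCup.le (sq_nonneg (vγ x - l1))]
    have hB1 : Cu * l1 ^ 2 ≤ Cu * p ^ 2 := mul_le_mul_of_nonneg_left hl1p2 hCup.le
    have hB2 : MK * (Cu * l1 ^ 2) ≤ MK * (Cu * p ^ 2) :=
      mul_le_mul_of_nonneg_left hB1 hMK0.le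
    have hC₈eq : C₈ * (vγ x ^ 2 + p ^ 2)
        = 2 * (Cu * vγ x ^ 2) + 2 * (Cu * p ^ 2) + 8 * (MK * (Cu * vγ x ^ 2))
          + 8 * (MK * (Cu * p ^ 2)) := by rw [hC₈def]; ring
    have hMKCua : 0 ≤ MK * (Cu * vγ x ^ 2) :=
      mul_nonneg hMK0.le (mul_nonneg hCup.le (sq_nonneg _))
    have hMKCup : 0 ≤ MK * (Cu * p ^ 2) :=
      mul_nonneg hMK0.le (mul_nonneg hCup.le (sq_nonneg _))
    -- rewrite the middle integral term of hstep
    have hmid : 2 * (MK * (Cu * p ^ 2 + 2 * Cu * l1 * l1 + Cu * l1 ^ 2))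
        = 2 * (MK * (Cu * p ^ 2)) + 6 * (MK * (Cu * l1 ^ 2)) := by ring
    have hfirst : (2 * Cu * l1) * vγ x = 2 * (Cu * (l1 * vγ x)) := by ring
    linarith only [hstep, h2al, hB1, hB2, hMKCua, hMKCup, hC₈eq, hmid, hfirst]
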